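/- Let E be a finite-dimensional real normed vector space and A : E → (E →L[ℝ] E →L[ℝ] E) a smooth map such that A(p) is symmetric for every p. Then the following are equivalent: (i) the λ-linear part of the curvature of the pencil ∇_λ vanishes, i.e. (DA)(p)(u)(v)(w) = (DA)(p)(v)(u)(w) for all p,u,v,w ∈ E; (ii) there exists a smooth map C : E → E with A(p) = (D²C)(p) for every p ∈ E, i.e. A(p)(v)(w) = (D²C)(p)(v,w) for all p,v,w. -/

import Mathlib

open ContDiff

variable {E : Type*} [NormedAddCommGroup E] [NormedSpace ℝ E]

/-- Lie bracket of vector fields on a normed space: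
`[X,Y](p) = (DY)(p)(X(p)) - (DX)(p)(Y(p))`. -/
noncomputable def lieB (X Y : E → E) : E → E :=
  fun p => fderiv ℝ Y p (X p) - fderiv ℝ X p (Y p)

/-- Multiplication on vector fields induced by a field of bilinear maps `A`:
`(X ∘ Y)(p) = A(p)(X(p))(Y(p))`. -/
noncomputable def mulA (A : E → (E →L[ℝ] E →L[ℝ] E)) (X Y : E → E) : E → E :=
  fun p => A p (X p) (Y p)

theorem poincare {E F : Type*} [NormedAddCommGroup E] [NormedSpace ℝ E] [FiniteDimensional ℝ E]
    [NormedAddCommGroup F] [NormedSpace ℝ F] [FiniteDimensional ℝ F]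
    (om : E → (E →L[ℝ] F)) (hom : ContDiff ℝ ∞ om)
    (hcl : ∀ p u v : E, fderiv ℝ om p u v = fderiv ℝ om p v u) :
    ∃ g : E → F, ContDiff ℝ ∞ g ∧ ∀ p, fderiv ℝ g p = om p := by
  classical
  set g : E → F := fun x => ∫ t in (0:ℝ)..1, om (t • x) x with hg
  have homd : Differentiable ℝ om := hom.differentiable (by simp)
  have homc : Continuous om := hom.continuous
  have hom'c : Continuous (fderiv ℝ om) := (hom.fderiv_right (m := ∞) le_rfl).continuous
  -- the candidate derivative of the integrand in `x`
  set F' : E → ℝ → (E →L[ℝ] F) := fun x t =>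
    om (t • x) + t • ((fderiv ℝ om (t • x)).flip x) with hF'
  have hdiff : ∀ (t : ℝ) (x : E), HasFDerivAt (fun y => om (t • y) y) (F' x t) x := by
    intro t x
    have h1 : HasFDerivAt (fun y : E => t • y) (t • ContinuousLinearMap.id ℝ E) x :=
      (hasFDerivAt_id x).const_smul t
    have h2 : HasFDerivAt (fun y => om (t • y))
        ((fderiv ℝ om (t • x)).comp (t • ContinuousLinearMap.id ℝ E)) x :=
      (homd (t • x)).hasFDerivAt.comp x h1
    have := h2.clm_apply (hasFDerivAt_id x)
    convert this using 1
    · ext v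
      simp [hF', mul_comm]
    · ext v
      simp [hF', mul_comm]
  have key : ∀ p : E, HasFDerivAt g (om p) p := by
    intro p
    set R : ℝ := ‖p‖ + 1 with hR
    have hRpos : 0 < R := by positivity
    obtain ⟨M₁, hM₁⟩ := (isCompact_closedBall (0:E) R).exists_bound_of_continuousOn
      homc.continuousOn
    obtain ⟨M₂, hM₂⟩ := (isCompact_closedBall (0:E) R).exists_bound_of_continuousOn
      (hom.fderiv_right (m := ∞) le_rfl).continuous.continuousOn
    have hM₁0 : 0 ≤ M₁ := le_trans (norm_nonneg _) (hM₁ 0 (by simp [hRpos.le]))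
    have hM₂0 : 0 ≤ M₂ := le_trans (norm_nonneg _) (hM₂ 0 (by simp [hRpos.le]))
    have hnorm : ∀ x ∈ Metric.ball p 1, ‖x‖ ≤ R := by
      intro x hx
      have h1 : ‖x - p‖ < 1 := by simpa [dist_eq_norm] using mem_ball_iff_norm.mp hx
      calc ‖x‖ = ‖p + (x - p)‖ := by rw [add_sub_cancel]
        _ ≤ ‖p‖ + ‖x - p‖ := norm_add_le _ _
        _ ≤ ‖p‖ + 1 := by linarith
    have hmem : ∀ t ∈ Set.uIoc (0:ℝ) 1, ∀ x ∈ Metric.ball p 1, t • x ∈ Metric.closedBall (0:E) R := by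
      intro t ht x hx
      have ht' : t ∈ Set.Ioc (0:ℝ) 1 := by rwa [Set.uIoc_of_le zero_le_one] at ht
      simp only [Metric.mem_closedBall, dist_zero_right, norm_smul, Real.norm_eq_abs,
        abs_of_pos ht'.1]
      calc t * ‖x‖ ≤ 1 * ‖x‖ := mul_le_mul_of_nonneg_right ht'.2 (norm_nonneg _)
        _ ≤ R := by simpa using hnorm x hx
    have hbound : ∀ t ∈ Set.uIoc (0:ℝ) 1, ∀ x ∈ Metric.ball p 1,
        ‖F' x t‖ ≤ M₁ + M₂ * R := by
      intro t ht x hx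
      have ht' : t ∈ Set.Ioc (0:ℝ) 1 := by rwa [Set.uIoc_of_le zero_le_one] at ht
      have hmem' := hmem t ht x hx
      have hxR : ‖x‖ ≤ R := hnorm x hx
      apply ContinuousLinearMap.opNorm_le_bound _ (by positivity)
      intro v
      have e1 : ‖om (t • x) v‖ ≤ M₁ * ‖v‖ :=
        le_trans (ContinuousLinearMap.le_opNorm _ _)
          (mul_le_mul_of_nonneg_right (hM₁ _ hmem') (norm_nonneg _))
      have e2 : ‖(fderiv ℝ om (t • x)) v x‖ ≤ M₂ * ‖v‖ * R := by
        calc ‖(fderiv ℝ om (t • x)) v x‖ ≤ ‖(fderiv ℝ om (t • x)) v‖ * ‖x‖ :=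
              ContinuousLinearMap.le_opNorm _ _
          _ ≤ ‖fderiv ℝ om (t • x)‖ * ‖v‖ * ‖x‖ := by
              apply mul_le_mul_of_nonneg_right (ContinuousLinearMap.le_opNorm _ _) (norm_nonneg _)
          _ ≤ M₂ * ‖v‖ * R := by
              apply mul_le_mul (mul_le_mul_of_nonneg_right (hM₂ _ hmem') (norm_nonneg _)) hxR
                (norm_nonneg _) (by positivity)
      calc ‖(F' x t) v‖ = ‖om (t • x) v + t • ((fderiv ℝ om (t • x)) v x)‖ := by
            simp [hF']
        _ ≤ ‖om (t • x) v‖ + ‖t • ((fderiv ℝ om (t • x)) v x)‖ := norm_add_le _ _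
        _ ≤ M₁ * ‖v‖ + |t| * (M₂ * ‖v‖ * R) := by
            refine add_le_add e1 ?_
            rw [norm_smul, Real.norm_eq_abs]
            exact mul_le_mul_of_nonneg_left e2 (abs_nonneg _)
        _ ≤ M₁ * ‖v‖ + 1 * (M₂ * ‖v‖ * R) := by
            refine add_le_add le_rfl (mul_le_mul_of_nonneg_right ?_ (by positivity))
            rw [abs_of_pos ht'.1]; exact ht'.2
        _ = (M₁ + M₂ * R) * ‖v‖ := by ring
    have hFmeas : ∀ᶠ x in nhds p, MeasureTheory.AEStronglyMeasurable (fun t : ℝ => om (t • x) x)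
        (MeasureTheory.volume.restrict (Set.uIoc (0:ℝ) 1)) := by
      filter_upwards with x
      exact (Continuous.clm_apply (homc.comp (continuous_id.smul continuous_const))
        continuous_const).aestronglyMeasurable
    have hcont' : Continuous (F' p) := by
      apply Continuous.add
      · exact homc.comp (continuous_id.smul continuous_const)
      · apply Continuous.smul continuous_id
        have hflip : Continuous fun t : ℝ => (fderiv ℝ om (t • p)).flip :=
          (ContinuousLinearMap.flipₗᵢ ℝ E E F).continuous.comp
            (hom'c.comp (continuous_id.smul continuous_const))
        exact hflip.clm_apply continuous_const
    have hint : IntervalIntegrable (fun t : ℝ => om (t • p) p) MeasureTheory.volume 0 1 :=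
      (Continuous.clm_apply (homc.comp (continuous_id.smul continuous_const))
        continuous_const).intervalIntegrable _ _
    have hd := intervalIntegral.hasFDerivAt_integral_of_dominated_of_fderiv_le
      (F := fun x t => om (t • x) x) (F' := F') (x₀ := p) (bound := fun _ => M₁ + M₂ * R)
      (Metric.ball_mem_nhds p one_pos) hFmeas hint hcont'.aestronglyMeasurable
      (MeasureTheory.ae_of_all _ hbound) (intervalIntegrable_const)
      (MeasureTheory.ae_of_all _ fun t ht x hx => hdiff t x)
    -- now compute the integral ∫ F' p t dt = om p via FTC
    have hFTC : (∫ t in (0:ℝ)..1, F' p t) = om p := by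
      have hder : ∀ t : ℝ, HasDerivAt (fun s : ℝ => s • om (s • p))
          (om (t • p) + t • ((fderiv ℝ om (t • p)).flip p)) t := by
        intro t
        have h1 : HasDerivAt (fun s : ℝ => om (s • p)) (fderiv ℝ om (t • p) p) t := by
          have := ((homd (t • p)).hasFDerivAt.comp_hasDerivAt t
            ((hasDerivAt_id t).smul_const p))
          simp only [one_smul] at this
          exact this
        have := (hasDerivAt_id t).smul h1
        refine this.congr_deriv ?_
        ext v
        simp [hcl (t • p) p v, add_comm]
      have hci : IntervalIntegrable (fun t : ℝ => om (t • p) + t • ((fderiv ℝ om (t • p)).flip p))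
          MeasureTheory.volume 0 1 := by
        apply Continuous.intervalIntegrable
        apply Continuous.add
        · exact homc.comp (continuous_id.smul continuous_const)
        · apply Continuous.smul continuous_id
          have hflip : Continuous fun t : ℝ => (fderiv ℝ om (t • p)).flip :=
            (ContinuousLinearMap.flipₗᵢ ℝ E E F).continuous.comp
              (hom'c.comp (continuous_id.smul continuous_const))
          exact hflip.clm_apply continuous_const
      have := intervalIntegral.integral_eq_sub_of_hasDerivAt
        (fun t _ => hder t) hci
      simp only [one_smul, zero_smul, sub_zero] at this
      rw [← this]
    rw [hFTC] at hd
    exact hd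
  refine ⟨g, ?_, fun p => (key p).fderiv⟩
  rw [contDiff_infty_iff_fderiv]
  have : fderiv ℝ g = om := funext fun p => (key p).fderiv
  exact ⟨fun p => (key p).differentiableAt, this ▸ hom⟩

/-- vanishing of the `λ`-linear part of the curvature of the pencil
is equivalent to the existence of a (global, smooth) vector potential `C` with
`A = D²C`. -/
theorem stmt3 {E : Type*} [NormedAddCommGroup E] [NormedSpace ℝ E] [FiniteDimensional ℝ E]
    (A : E → (E →L[ℝ] E →L[ℝ] E)) (hA : ContDiff ℝ ∞ A)
    (hsymm : ∀ p u v : E, A p u v = A p v u) :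
    (∀ p u v w : E, fderiv ℝ A p u v w = fderiv ℝ A p v u w) ↔
    (∃ C : E → E, ContDiff ℝ ∞ C ∧
      ∀ p v w : E, A p v w = fderiv ℝ (fderiv ℝ C) p v w) := by
  constructor
  · intro h
    obtain ⟨B, hB, hBd⟩ := poincare A hA (fun p u v => by ext w; exact h p u v w)
    obtain ⟨C, hC, hCd⟩ := poincare B hB (fun p u v => by
      rw [hBd p]; exact hsymm p u v)
    refine ⟨C, hC, fun p v w => ?_⟩
    have : fderiv ℝ C = B := funext hCd
    rw [this, hBd p]
  · rintro ⟨C, hC, hCd⟩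
    have hAeq : A = fderiv ℝ (fderiv ℝ C) := by
      funext p; ext v w; exact hCd p v w
    intro p u v w
    have hf : ContDiff ℝ ∞ (fderiv ℝ C) := (contDiff_infty_iff_fderiv.mp hC).2
    have hs : IsSymmSndFDerivAt ℝ (fderiv ℝ C) p :=
      hf.contDiffAt.isSymmSndFDerivAt (by simp [minSmoothness_of_isRCLikeNormedField]; exact WithTop.coe_le_coe.mpr (le_top : (2:ℕ∞) ≤ ⊤))
    rw [hAeq]
    exact congrFun (congrArg _ (hs.eq u v)) w
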